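/- Let y : [0, ∞) → ℝ be the solution of y''(t) = k·(t+1)^(−3)·y(t) with y(0) = 1 and y'(0) = 1, where k > 0. Then there exists c > 0 such that y(t) ≤ c·(t+1) for all t ≥ 0. -/

import Mathlib

open Real Set

noncomputable def psiF (a t : ℝ) : ℝ := 2*a - 2*a*(t+1)^(-(1/2) : ℝ)
noncomputable def phiF (a t : ℝ) : ℝ := (t+1) * Real.exp (psiF a t)
noncomputable def phiF' (a t : ℝ) : ℝ :=
  Real.exp (psiF a t) * (1 + a*(t+1)^(-(1/2) : ℝ))
noncomputable def phiF'' (a t : ℝ) : ℝ :=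
  Real.exp (psiF a t) * (a/2*(t+1)^(-(3/2) : ℝ) + a*a*(t+1)^(-(2:ℝ)))

lemma rpow_shift1 (x : ℝ) (hx : 0 < x) : x * x^(-(3/2) : ℝ) = x^(-(1/2) : ℝ) := by
  have h := (Real.rpow_add hx 1 (-(3/2))).symm
  rw [Real.rpow_one] at h
  norm_num at h
  exact h

lemma rpow_shift2 (x : ℝ) (hx : 0 < x) :
    x^(-(1/2) : ℝ) * x^(-(3/2) : ℝ) = x^(-(2:ℝ)) := by
  rw [← Real.rpow_add hx]
  norm_num

lemma hasDerivAt_psiF (a t : ℝ) (ht : 0 < t + 1) :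
    HasDerivAt (psiF a) (a * (t+1)^(-(3/2) : ℝ)) t := by
  have h1 : HasDerivAt (fun s : ℝ => s + 1) 1 t := (hasDerivAt_id t).add_const 1
  have h2 : HasDerivAt (fun s : ℝ => (s+1)^(-(1/2):ℝ))
      (1 * (-(1/2)) * (t+1)^((-(1/2):ℝ) - 1)) t :=
    h1.rpow_const (Or.inl ht.ne')
  have h3 := (h2.const_mul (2*a)).const_sub (2*a)
  have he : ((-(1/2):ℝ) - 1) = (-(3/2):ℝ) := by norm_num
  rw [he] at h3
  refine h3.congr_deriv ?_
  ring

lemma hasDerivAt_phiF (a t : ℝ) (ht : 0 < t + 1) :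
    HasDerivAt (phiF a) (phiF' a t) t := by
  have h1 : HasDerivAt (fun s : ℝ => s + 1) 1 t := (hasDerivAt_id t).add_const 1
  have hE : HasDerivAt (fun s => Real.exp (psiF a s))
      (Real.exp (psiF a t) * (a * (t+1)^(-(3/2) : ℝ))) t :=
    (hasDerivAt_psiF a t ht).exp
  have h3 := h1.mul hE
  refine h3.congr_deriv ?_
  unfold phiF'
  rw [← rpow_shift1 (t+1) ht]
  ring

lemma hasDerivAt_phiF' (a t : ℝ) (ht : 0 < t + 1) :
    HasDerivAt (phiF' a) (phiF'' a t) t := by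
  have h1 : HasDerivAt (fun s : ℝ => s + 1) 1 t := (hasDerivAt_id t).add_const 1
  have hE : HasDerivAt (fun s => Real.exp (psiF a s))
      (Real.exp (psiF a t) * (a * (t+1)^(-(3/2) : ℝ))) t :=
    (hasDerivAt_psiF a t ht).exp
  have h2 : HasDerivAt (fun s : ℝ => (s+1)^(-(1/2):ℝ))
      (1 * (-(1/2)) * (t+1)^((-(1/2):ℝ) - 1)) t :=
    h1.rpow_const (Or.inl ht.ne')
  have he : ((-(1/2):ℝ) - 1) = (-(3/2):ℝ) := by norm_num
  rw [he] at h2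
  have h3 := hE.mul ((h2.const_mul a).const_add 1)
  refine h3.congr_deriv ?_
  unfold phiF''
  rw [← rpow_shift2 (t+1) ht]
  ring

lemma rpow_neg_two (x : ℝ) (hx : 0 < x) : x^(-(2:ℝ)) = 1/x^2 := by
  rw [Real.rpow_neg hx.le]
  rw [show ((2:ℝ)) = ((2:ℕ):ℝ) by norm_num, Real.rpow_natCast]
  simp

lemma psiF_zero (a : ℝ) : psiF a 0 = 0 := by
  simp [psiF]

lemma phiF_zero (a : ℝ) : phiF a 0 = 1 := by
  simp [phiF, psiF_zero]

lemma phiF'_zero (a : ℝ) : phiF' a 0 = 1 + a := by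
  simp [phiF', psiF_zero]

lemma phiF_le (a t : ℝ) (ha : 0 ≤ a) (ht : 0 ≤ t) :
    phiF a t ≤ Real.exp (2*a) * (t+1) := by
  have hx : (0:ℝ) < t + 1 := by linarith
  have h1 : psiF a t ≤ 2*a := by
    unfold psiF
    have : 0 ≤ 2*a*(t+1)^(-(1/2):ℝ) := by positivity
    linarith
  unfold phiF
  have := Real.exp_le_exp.mpr h1
  nlinarith [Real.exp_pos (psiF a t)]

lemma phiF_pos (a t : ℝ) (ht : 0 ≤ t) : 0 < phiF a t := by
  have hx : (0:ℝ) < t + 1 := by linarith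
  unfold phiF
  positivity

lemma phiF''_ge (a t : ℝ) (ha : 0 ≤ a) (ht : 0 ≤ t) :
    a*a/(t+1)^3 * phiF a t ≤ phiF'' a t := by
  have hx : (0:ℝ) < t + 1 := by linarith
  unfold phiF phiF''
  rw [rpow_neg_two _ hx]
  have h1 : 0 ≤ a/2*(t+1)^(-(3/2):ℝ) := by positivity
  have hE : 0 < Real.exp (psiF a t) := Real.exp_pos _
  have key : a*a/(t+1)^3 * ((t+1) * Real.exp (psiF a t))
      = Real.exp (psiF a t) * (a*a*(1/(t+1)^2)) := by
    field_simp
  rw [key]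
  nlinarith


/-- The solution of `y'' = k (t+1)^(-3) y`, `y 0 = 1`, `y' 0 = 1` with `k > 0`
satisfies `y t ≤ c (t+1)` for some `c > 0` and all `t ≥ 0`. -/
theorem stmt1 (k : ℝ) (hk : 0 < k) (y : ℝ → ℝ)
    (hpos : ∀ t ≥ (0:ℝ), 0 < y t)
    (hy1 : ∀ t ≥ (0:ℝ), DifferentiableAt ℝ y t)
    (hy2 : ∀ t ≥ (0:ℝ), DifferentiableAt ℝ (deriv y) t)
    (hode : ∀ t ≥ (0:ℝ), deriv (deriv y) t = k / (t + 1) ^ 3 * y t)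
    (hy0 : y 0 = 1) (hy'0 : deriv y 0 = 1) :
    ∃ c > 0, ∀ t ≥ (0:ℝ), y t ≤ c * (t + 1) := by
  set a := Real.sqrt k with ha
  have ha0 : 0 < a := Real.sqrt_pos.mpr hk
  have hka : a * a = k := Real.mul_self_sqrt hk.le
  set g : ℝ → ℝ := fun t => phiF' a t - deriv y t with hgdef
  set h : ℝ → ℝ := fun t => phiF a t - y t with hhdef
  have hxpos : ∀ t : ℝ, 0 ≤ t → (0:ℝ) < t + 1 := fun t ht => by linarith
  have hhd : ∀ t ≥ (0:ℝ), HasDerivAt h (g t) t := fun t ht =>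
    (hasDerivAt_phiF a t (hxpos t ht)).sub (hy1 t ht).hasDerivAt
  have hgd : ∀ t ≥ (0:ℝ), HasDerivAt g (phiF'' a t - deriv (deriv y) t) t := fun t ht =>
    (hasDerivAt_phiF' a t (hxpos t ht)).sub (hy2 t ht).hasDerivAt
  have hgc : ContinuousOn g (Set.Ici (0:ℝ)) := fun t ht =>
    ((hgd t ht).differentiableAt.continuousAt).continuousWithinAt
  have hh0 : h 0 = 0 := by simp [hhdef, phiF_zero, hy0]
  have hg0 : g 0 = a := by simp [hgdef, phiF'_zero, hy'0]
  -- main step: if g > 0 on [0, T), then h T ≥ 0 and g T ≥ a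
  have main : ∀ T ≥ (0:ℝ), (∀ s, 0 ≤ s → s < T → 0 < g s) → 0 ≤ h T ∧ a ≤ g T := by
    intro T hT hgpos
    have hIcc : ∀ s ∈ Set.Icc (0:ℝ) T, 0 ≤ s := fun s hs => hs.1
    have hhcont : ContinuousOn h (Set.Icc 0 T) := fun s hs =>
      ((hhd s hs.1).differentiableAt.continuousAt).continuousWithinAt
    have hintsub : interior (Set.Icc (0:ℝ) T) ⊆ Set.Ioo 0 T := by
      rw [interior_Icc]
    have hhmono : MonotoneOn h (Set.Icc 0 T) := by
      apply monotoneOn_of_deriv_nonneg (convex_Icc 0 T) hhcont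
      · intro s hs
        exact ((hhd s (hintsub hs).1.le).differentiableAt).differentiableWithinAt
      · intro s hs
        have hs' := hintsub hs
        rw [(hhd s hs'.1.le).deriv]
        exact (hgpos s hs'.1.le hs'.2).le
    have hhnn : ∀ s ∈ Set.Icc (0:ℝ) T, 0 ≤ h s := by
      intro s hs
      have := hhmono (Set.left_mem_Icc.mpr hT) hs hs.1
      rw [hh0] at this
      exact this
    have hgmono : MonotoneOn g (Set.Icc 0 T) := by
      apply monotoneOn_of_deriv_nonneg (convex_Icc 0 T)
        (hgc.mono (fun x (hx : x ∈ Set.Icc (0:ℝ) T) => hx.1))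
      · intro s hs
        exact ((hgd s (hintsub hs).1.le).differentiableAt).differentiableWithinAt
      · intro s hs
        have hs' := hintsub hs
        have hs0 : (0:ℝ) ≤ s := hs'.1.le
        rw [(hgd s hs0).deriv, hode s hs0]
        have hb := phiF''_ge a s ha0.le hs0
        rw [hka] at hb
        have hq : 0 < k / (s+1)^3 := by
          apply div_pos hk
          positivity
        have hhs : 0 ≤ h s := hhnn s ⟨hs0, hs'.2.le⟩
        have : k / (s+1)^3 * y s ≤ k / (s+1)^3 * phiF a s := by
          have : y s ≤ phiF a s := by
            have := hhs; simp only [hhdef] at this; linarith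
          exact mul_le_mul_of_nonneg_left this hq.le
        linarith
    constructor
    · exact hhnn T ⟨hT, le_refl T⟩
    · have := hgmono (Set.left_mem_Icc.mpr hT) ⟨hT, le_refl T⟩ hT
      rw [hg0] at this
      exact this
  -- g is positive everywhere on [0, ∞)
  have gpos : ∀ t ≥ (0:ℝ), 0 < g t := by
    by_contra hcon
    push_neg at hcon
    obtain ⟨t0, ht0, hgt0⟩ := hcon
    set C : Set ℝ := Set.Ici 0 ∩ g ⁻¹' Set.Iic 0 with hC
    have hCcl : IsClosed C := hgc.preimage_isClosed_of_isClosed isClosed_Ici isClosed_Iic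
    have hCne : C.Nonempty := ⟨t0, ht0, hgt0⟩
    have hCbdd : BddBelow C := ⟨0, fun x hx => hx.1⟩
    have hTmem : sInf C ∈ C := hCcl.csInf_mem hCne hCbdd
    set T := sInf C with hT
    have hT0 : 0 ≤ T := hTmem.1
    have hgT : g T ≤ 0 := hTmem.2
    have hgbefore : ∀ s, 0 ≤ s → s < T → 0 < g s := by
      intro s hs hsT
      by_contra hgs
      push_neg at hgs
      exact absurd (csInf_le hCbdd ⟨hs, hgs⟩) (not_le.mpr hsT)
    have := (main T hT0 hgbefore).2
    linarith
  -- conclude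
  refine ⟨Real.exp (2*a), Real.exp_pos _, fun t ht => ?_⟩
  have hht : 0 ≤ h t := (main t ht (fun s hs _ => gpos s hs)).1
  have h1 : y t ≤ phiF a t := by simp only [hhdef] at hht; linarith
  exact h1.trans (phiF_le a t ha0.le ht)
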